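/- Over the two-letter alphabet {a,b}, neither the language (a,b)*a of all nonempty words whose last letter is a, nor the language a(a,b)* of all nonempty words whose first letter is a, is recognized by any PRA-C with any interval. -/

import Mathlib

/-- A real square matrix is doubly stochastic if all entries are nonnegative and
every row and every column sums to 1. -/
def DoublyStochastic {n : ℕ} (A : Matrix (Fin n) (Fin n) ℝ) : Prop :=
  (∀ i j, 0 ≤ A i j) ∧ (∀ i, ∑ j, A i j = 1) ∧ (∀ j, ∑ i, A i j = 1)

/-- A 1-way probabilistic reversible C-automaton (PRA-C) over input alphabet `α`:
a finite state set `Fin n`, an initial state, a set of accepting states, and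
a doubly stochastic matrix for each symbol of the working alphabet
(the letters of `α` together with the end-markers `#` and `$`). -/
structure PRAC (α : Type) where
  n : ℕ
  q0 : Fin n
  F : Finset (Fin n)
  V : α → Matrix (Fin n) (Fin n) ℝ
  Vhash : Matrix (Fin n) (Fin n) ℝ
  Vdollar : Matrix (Fin n) (Fin n) ℝ
  ds : ∀ a, DoublyStochastic (V a)
  ds_hash : DoublyStochastic Vhash
  ds_dollar : DoublyStochastic Vdollar

namespace PRAC

variable {α : Type}

/-- Acceptance probability of a word `w = σ₁…σ_k`: the total mass on accepting states of
`V_$ ⬝ V_{σ_k} ⬝ ⋯ ⬝ V_{σ₁} ⬝ V_# ⬝ e_{q₀}`. -/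
def accProb (A : PRAC α) (w : List α) : ℝ :=
  ∑ q ∈ A.F,
    (A.Vdollar.mulVec
      (w.foldl (fun v a => (A.V a).mulVec v) (A.Vhash.mulVec (Pi.single A.q0 1)))) q

/-- Recognition of a language with interval `(p₁, p₂)`. -/
def Recognizes (A : PRAC α) (L : Set (List α)) (p1 p2 : ℝ) : Prop :=
  0 ≤ p1 ∧ p1 < p2 ∧ p2 ≤ 1 ∧
  (∀ w ∈ L, p2 ≤ A.accProb w) ∧ (∀ w ∉ L, A.accProb w ≤ p1)

/-- Recognition with probability `p`, i.e. with interval `(1 - p, p)`. -/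
def RecognizesWithProb (A : PRAC α) (L : Set (List α)) (p : ℝ) : Prop :=
  A.Recognizes L (1 - p) p

end PRAC

noncomputable section
namespace PRACAux
open Filter Topology Matrix

variable {n : ℕ}

def ip (v w : Fin n → ℝ) : ℝ := ∑ i, v i * w i
def Q (v : Fin n → ℝ) : ℝ := ∑ i, v i ^ 2

lemma Q_nonneg (v : Fin n → ℝ) : 0 ≤ Q v := Finset.sum_nonneg fun i _ => sq_nonneg _

lemma Q_zero : Q (0 : Fin n → ℝ) = 0 := by simp [Q]

lemma eq_zero_of_Q_nonpos {v : Fin n → ℝ} (h : Q v ≤ 0) : v = 0 := by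
  funext i
  have h1 : ∀ i ∈ Finset.univ, (0:ℝ) ≤ v i ^ 2 := fun _ _ => sq_nonneg _
  have h2 := (Finset.sum_eq_zero_iff_of_nonneg h1).mp (le_antisymm h (Q_nonneg v)) i
    (Finset.mem_univ i)
  exact sq_eq_zero_iff.mp h2

lemma ip_comm (v w : Fin n → ℝ) : ip v w = ip w v := by
  unfold ip; exact Finset.sum_congr rfl fun i _ => mul_comm _ _

lemma ip_self (v : Fin n → ℝ) : ip v v = Q v := by
  unfold ip Q; exact Finset.sum_congr rfl fun i _ => (sq (v i)).symm

lemma ip_sub (u x y : Fin n → ℝ) : ip u (x - y) = ip u x - ip u y := by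
  unfold ip
  rw [← Finset.sum_sub_distrib]
  exact Finset.sum_congr rfl fun i _ => by simp [Pi.sub_apply]; ring

lemma Q_sub (x y : Fin n → ℝ) : Q (x - y) = Q x - 2 * ip x y + Q y := by
  unfold Q ip
  rw [Finset.mul_sum, ← Finset.sum_sub_distrib, ← Finset.sum_add_distrib]
  exact Finset.sum_congr rfl fun i _ => by simp [Pi.sub_apply]; ring

lemma ip_transpose (A : Matrix (Fin n) (Fin n) ℝ) (x y : Fin n → ℝ) :
    ip (Aᵀ.mulVec x) y = ip x (A.mulVec y) := by
  unfold ip Matrix.mulVec dotProduct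
  simp only [Matrix.transpose_apply, Finset.sum_mul, Finset.mul_sum]
  rw [Finset.sum_comm]
  exact Finset.sum_congr rfl fun i _ => Finset.sum_congr rfl fun j _ => by ring

lemma ip_sq_le (u x : Fin n → ℝ) : ip u x ^ 2 ≤ Q u * Q x :=
  Finset.sum_mul_sq_le_sq_mul_sq _ _ _

lemma Q_mulVec_le {A : Matrix (Fin n) (Fin n) ℝ} (hA : DoublyStochastic A) (v : Fin n → ℝ) :
    Q (A.mulVec v) ≤ Q v := by
  obtain ⟨hpos, hrow, hcol⟩ := hA
  unfold Q Matrix.mulVec dotProduct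
  have key : ∀ i, (∑ j, A i j * v j) ^ 2 ≤ ∑ j, A i j * v j ^ 2 := by
    intro i
    have cs := Finset.sum_mul_sq_le_sq_mul_sq Finset.univ
      (fun j => Real.sqrt (A i j)) (fun j => Real.sqrt (A i j) * v j)
    have e1 : ∀ j, Real.sqrt (A i j) * (Real.sqrt (A i j) * v j) = A i j * v j := by
      intro j; rw [← mul_assoc, Real.mul_self_sqrt (hpos i j)]
    have e2 : ∀ j, Real.sqrt (A i j) ^ 2 = A i j := fun j => Real.sq_sqrt (hpos i j)
    have e3 : ∀ j, (Real.sqrt (A i j) * v j) ^ 2 = A i j * v j ^ 2 := by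
      intro j; rw [mul_pow, e2]
    simp only [e1, e2, e3] at cs
    calc (∑ j, A i j * v j) ^ 2 ≤ (∑ j, A i j) * ∑ j, A i j * v j ^ 2 := cs
      _ = ∑ j, A i j * v j ^ 2 := by rw [hrow i, one_mul]
  calc ∑ i, (∑ j, A i j * v j) ^ 2 ≤ ∑ i, ∑ j, A i j * v j ^ 2 :=
        Finset.sum_le_sum fun i _ => key i
    _ = ∑ j, (∑ i, A i j) * v j ^ 2 := by
        rw [Finset.sum_comm]; exact Finset.sum_congr rfl fun j _ => (Finset.sum_mul _ _ _).symm
    _ = ∑ j, v j ^ 2 := Finset.sum_congr rfl fun j _ => by rw [hcol j, one_mul]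

lemma ds_transpose {A : Matrix (Fin n) (Fin n) ℝ} (h : DoublyStochastic A) :
    DoublyStochastic Aᵀ := by
  obtain ⟨hpos, hrow, hcol⟩ := h
  exact ⟨fun i j => hpos j i, fun i => hcol i, fun j => hrow j⟩

lemma rigid {A : Matrix (Fin n) (Fin n) ℝ} {v : Fin n → ℝ}
    (hAT : ∀ y, Q (Aᵀ.mulVec y) ≤ Q y) (hQeq : Q (A.mulVec v) = Q v) :
    Aᵀ.mulVec (A.mulVec v) = v := by
  have hip : ip (Aᵀ.mulVec (A.mulVec v)) v = Q (A.mulVec v) := by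
    rw [ip_transpose, ip_self]
  have h1 : Q (Aᵀ.mulVec (A.mulVec v) - v) ≤ 0 := by
    rw [Q_sub, hip, hQeq]
    have := hAT (A.mulVec v)
    linarith [hQeq]
  have := eq_zero_of_Q_nonpos h1
  exact sub_eq_zero.mp this

-- fold layer (to be appended inside namespace)
variable {n : ℕ}

def fold (V : Bool → Matrix (Fin n) (Fin n) ℝ) (w : List Bool) (x : Fin n → ℝ) : Fin n → ℝ :=
  w.foldl (fun v b => (V b).mulVec v) x

lemma fold_nil (V : Bool → Matrix (Fin n) (Fin n) ℝ) (x : Fin n → ℝ) : fold V [] x = x := rfl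

lemma fold_cons (V : Bool → Matrix (Fin n) (Fin n) ℝ) (b : Bool) (w : List Bool) (x : Fin n → ℝ) :
    fold V (b :: w) x = fold V w ((V b).mulVec x) := rfl

lemma fold_append (V : Bool → Matrix (Fin n) (Fin n) ℝ) (w w' : List Bool) (x : Fin n → ℝ) :
    fold V (w ++ w') x = fold V w' (fold V w x) := List.foldl_append

lemma fold_concat (V : Bool → Matrix (Fin n) (Fin n) ℝ) (w : List Bool) (b : Bool) (x : Fin n → ℝ) :
    fold V (w ++ [b]) x = (V b).mulVec (fold V w x) := fold_append V w [b] x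

lemma Q_fold_le {V : Bool → Matrix (Fin n) (Fin n) ℝ}
    (hV : ∀ b v, Q ((V b).mulVec v) ≤ Q v) (w : List Bool) (x : Fin n → ℝ) :
    Q (fold V w x) ≤ Q x := by
  induction w generalizing x with
  | nil => exact le_rfl
  | cons b w ih => exact le_trans (ih _) (hV b x)

lemma continuous_mulVec (A : Matrix (Fin n) (Fin n) ℝ) :
    Continuous fun v : Fin n → ℝ => A.mulVec v := by
  have : (fun v : Fin n → ℝ => A.mulVec v) = A.mulVecLin := by
    funext v; simp [Matrix.mulVecLin_apply]
  rw [this]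
  exact LinearMap.continuous_of_finiteDimensional _

lemma continuous_fold (V : Bool → Matrix (Fin n) (Fin n) ℝ) (w : List Bool) :
    Continuous (fold V w) := by
  induction w with
  | nil => exact continuous_id
  | cons b w ih =>
      have : fold V (b :: w) = (fold V w) ∘ fun x => (V b).mulVec x := rfl
      rw [this]
      exact ih.comp (continuous_mulVec _)

lemma continuous_ip (u : Fin n → ℝ) : Continuous fun v : Fin n → ℝ => ip u v := by
  unfold ip
  exact continuous_finset_sum _ fun i _ => continuous_const.mul (continuous_apply i)

lemma continuous_Q : Continuous (Q (n := n)) := by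
  unfold Q
  exact continuous_finset_sum _ fun i _ => (continuous_apply i).pow 2

lemma mem_ball_of_Q_le {v : Fin n → ℝ} {R : ℝ} (h : Q v ≤ R) :
    v ∈ Metric.closedBall (0 : Fin n → ℝ) (Real.sqrt R) := by
  rw [Metric.mem_closedBall, dist_zero_right]
  refine pi_norm_le_iff_of_nonneg (Real.sqrt_nonneg R) |>.mpr fun i => ?_
  rw [Real.norm_eq_abs, ← Real.sqrt_sq_eq_abs]
  refine Real.sqrt_le_sqrt ?_
  calc v i ^ 2 ≤ ∑ j, v j ^ 2 :=
        Finset.single_le_sum (fun j _ => sq_nonneg (v j)) (Finset.mem_univ i)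
    _ ≤ R := h

lemma core {n : ℕ} (V : Bool → Matrix (Fin n) (Fin n) ℝ)
    (hV : ∀ b v, Q ((V b).mulVec v) ≤ Q v)
    (hVT : ∀ b v, Q ((V b)ᵀ.mulVec v) ≤ Q v)
    (u x₀ : Fin n → ℝ) (p1 p2 : ℝ) (h12 : p1 < p2)
    (Hpos : ∀ w : List Bool, p2 ≤ ip u ((V true).mulVec (fold V w x₀)))
    (Hneg : ∀ w : List Bool, ip u ((V false).mulVec (fold V w x₀)) ≤ p1) : False := by
  set c : ℝ := ⨅ w : List Bool, Q (fold V w x₀) with hc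
  have hbdd : BddBelow (Set.range fun w : List Bool => Q (fold V w x₀)) :=
    ⟨0, by rintro x ⟨w, rfl⟩; exact Q_nonneg _⟩
  have hcle : ∀ w, c ≤ Q (fold V w x₀) := fun w => ciInf_le hbdd w
  have hc0 : 0 ≤ c := le_ciInf fun w => Q_nonneg _
  have hmin : ∀ k : ℕ, ∃ w, Q (fold V w x₀) < c + 1 / (k + 1) := by
    intro k
    refine exists_lt_of_ciInf_lt ?_
    have h1 : (0:ℝ) < 1 / (k + 1) := by positivity
    linarith
  choose ws hws using hmin
  set y : ℕ → (Fin n → ℝ) := fun k => fold V (ws k) x₀ with hy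
  have hQy : ∀ k, Q (y k) ≤ c + 1 := by
    intro k
    have h1 : 1 / ((k:ℝ) + 1) ≤ 1 := by
      rw [div_le_one (by positivity)]
      linarith [Nat.cast_nonneg (α := ℝ) k]
    have := hws k
    simp only [hy] at *
    linarith
  obtain ⟨z, _, φ, hφ, hzt⟩ :=
    (isCompact_closedBall (0 : Fin n → ℝ) (Real.sqrt (c + 1))).tendsto_subseq
      (fun k => mem_ball_of_Q_le (hQy k))
  -- Q z = c
  have hQz : Q z = c := by
    have h1 : Filter.Tendsto (fun k => Q (y (φ k))) Filter.atTop (nhds (Q z)) :=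
      (continuous_Q.tendsto z).comp hzt
    have h2 : Filter.Tendsto (fun k => Q (y (φ k))) Filter.atTop (nhds c) := by
      have hup : Filter.Tendsto (fun k : ℕ => c + 1 / ((φ k : ℝ) + 1)) Filter.atTop (nhds c) := by
        have hz0 : Filter.Tendsto (fun k : ℕ => 1 / ((φ k : ℝ) + 1)) Filter.atTop (nhds 0) :=
          tendsto_one_div_add_atTop_nhds_zero_nat.comp hφ.tendsto_atTop
        simpa using tendsto_const_nhds.add hz0
      refine tendsto_of_tendsto_of_tendsto_of_le_of_le tendsto_const_nhds hup
        (fun k => hcle _) (fun k => (hws (φ k)).le)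
    exact tendsto_nhds_unique h1 h2
  -- limits of orbit points stay on the sphere of radius c
  have hfold_y : ∀ (w : List Bool) (k : ℕ), fold V w (y k) = fold V (ws k ++ w) x₀ := by
    intro w k; rw [fold_append]
  have horb : ∀ w, Q (fold V w z) = c := by
    intro w
    have hto : Filter.Tendsto (fun k => fold V w (y (φ k))) Filter.atTop (nhds (fold V w z)) :=
      ((continuous_fold V w).tendsto z).comp hzt
    have hge : c ≤ Q (fold V w z) := by
      have hto2 : Filter.Tendsto (fun k => Q (fold V w (y (φ k)))) Filter.atTop
          (nhds (Q (fold V w z))) := (continuous_Q.tendsto _).comp hto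
      refine ge_of_tendsto hto2 (Filter.Eventually.of_forall fun k => ?_)
      rw [hfold_y]
      exact hcle _
    have hle : Q (fold V w z) ≤ c := hQz ▸ Q_fold_le hV w z
    linarith
  -- acceptance constraints pass to the orbit of z
  have Hpz : ∀ w, p2 ≤ ip u ((V true).mulVec (fold V w z)) := by
    intro w
    have hto : Filter.Tendsto (fun k => ip u ((V true).mulVec (fold V w (y (φ k)))))
        Filter.atTop (nhds (ip u ((V true).mulVec (fold V w z)))) := by
      exact (((continuous_ip u).comp ((continuous_mulVec (V true)).comp
        (continuous_fold V w))).tendsto z).comp hzt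
    refine le_of_tendsto_of_tendsto tendsto_const_nhds hto
      (Filter.Eventually.of_forall fun k => ?_)
    show p2 ≤ ip u ((V true).mulVec (fold V w (y (φ k))))
    rw [hfold_y]
    exact Hpos _
  have Hnz : ∀ w, ip u ((V false).mulVec (fold V w z)) ≤ p1 := by
    intro w
    have hto : Filter.Tendsto (fun k => ip u ((V false).mulVec (fold V w (y (φ k)))))
        Filter.atTop (nhds (ip u ((V false).mulVec (fold V w z)))) := by
      exact (((continuous_ip u).comp ((continuous_mulVec (V false)).comp
        (continuous_fold V w))).tendsto z).comp hzt
    refine le_of_tendsto_of_tendsto hto tendsto_const_nhds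
      (Filter.Eventually.of_forall fun k => ?_)
    show ip u ((V false).mulVec (fold V w (y (φ k)))) ≤ p1
    rw [hfold_y]
    exact Hneg _
  -- rigidity on the orbit of z
  have hrig : ∀ (b : Bool) (w : List Bool),
      (V b)ᵀ.mulVec ((V b).mulVec (fold V w z)) = fold V w z := by
    intro b w
    refine rigid (hVT b) ?_
    have h1 := horb (w ++ [b])
    rw [fold_concat] at h1
    rw [h1, horb w]
  have hiso : ∀ (b : Bool) (w w' : List Bool),
      Q ((V b).mulVec (fold V w z) - (V b).mulVec (fold V w' z)) =
        Q (fold V w z - fold V w' z) := by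
    intro b w w'
    have hip : ip ((V b).mulVec (fold V w z)) ((V b).mulVec (fold V w' z)) =
        ip (fold V w z) (fold V w' z) := by
      rw [← ip_transpose, hrig]
    have hq1 : Q ((V b).mulVec (fold V w z)) = Q (fold V w z) := by
      have h1 := horb (w ++ [b]); rw [fold_concat] at h1; rw [h1, horb w]
    have hq2 : Q ((V b).mulVec (fold V w' z)) = Q (fold V w' z) := by
      have h1 := horb (w' ++ [b]); rw [fold_concat] at h1; rw [h1, horb w']
    rw [Q_sub, Q_sub, hip, hq1, hq2]
  -- the sequence t m = fold (b a^m) z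
  set t : ℕ → (Fin n → ℝ) := fun m => fold V (false :: List.replicate m true) z with htdef
  have ht_succ : ∀ m, t (m + 1) = (V true).mulVec (t m) := by
    intro m
    show fold V (false :: List.replicate (m + 1) true) z = _
    rw [List.replicate_succ' (n := m) (a := true)]
    rw [show (false :: (List.replicate m true ++ [true])) =
      (false :: List.replicate m true) ++ [true] from rfl, fold_concat]
  have hshift : ∀ (m j k : ℕ), Q (t (j + m) - t (k + m)) = Q (t j - t k) := by
    intro m
    induction m with
    | zero => intro j k; rfl
    | succ m ihm =>
        intro j k
        have h1 := hiso true (false :: List.replicate (j + m) true)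
          (false :: List.replicate (k + m) true)
        rw [show j + (m + 1) = (j + m) + 1 by ring, show k + (m + 1) = (k + m) + 1 by ring,
          ht_succ, ht_succ]
        calc Q ((V true).mulVec (t (j + m)) - (V true).mulVec (t (k + m)))
            = Q (t (j + m) - t (k + m)) := h1
          _ = Q (t j - t k) := ihm j k
  -- recurrence
  set ε : ℝ := (p2 - p1) ^ 2 / (Q u + 1) with hεdef
  have hε : 0 < ε := by
    have := Q_nonneg u
    have h2 : 0 < p2 - p1 := by linarith
    positivity
  have htball : ∀ m, t m ∈ Metric.closedBall (0 : Fin n → ℝ) (Real.sqrt (c + 1)) := by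
    intro m
    refine mem_ball_of_Q_le ?_
    rw [show t m = fold V (false :: List.replicate m true) z from rfl, horb]
    linarith
  obtain ⟨ζ, _, ψ, hψ, hψt⟩ :=
    (isCompact_closedBall (0 : Fin n → ℝ) (Real.sqrt (c + 1))).tendsto_subseq htball
  have hdiff : Filter.Tendsto (fun m => Q (t (ψ (m + 1)) - t (ψ m))) Filter.atTop (nhds 0) := by
    have h1 : Filter.Tendsto (fun m => t (ψ (m + 1))) Filter.atTop (nhds ζ) :=
      hψt.comp (Filter.tendsto_add_atTop_nat 1)
    have h2 : Filter.Tendsto (fun m => t (ψ (m + 1)) - t (ψ m)) Filter.atTop (nhds (ζ - ζ)) :=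
      h1.sub hψt
    rw [sub_self] at h2
    have h3 := (continuous_Q.tendsto 0).comp h2
    rw [Q_zero] at h3
    exact h3
  obtain ⟨m, hm⟩ := (hdiff.eventually (gt_mem_nhds hε)).exists
  set j : ℕ := ψ m
  set k : ℕ := ψ (m + 1)
  have hjk : j < k := hψ (Nat.lt_succ_self m)
  set m0 : ℕ := k - j with hm0def
  have hm0 : 1 ≤ m0 := Nat.le_sub_of_add_le (by omega)
  have hQd : Q (t m0 - t 0) < ε := by
    have h1 : Q (t (m0 + j) - t (0 + j)) = Q (t m0 - t 0) := hshift j m0 0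
    rw [show m0 + j = k by omega, show 0 + j = j by omega] at h1
    rw [← h1]
    exact hm
  have hp2 : p2 ≤ ip u (t m0) := by
    have h1 := Hpz (false :: List.replicate (m0 - 1) true)
    have h2 : (V true).mulVec (fold V (false :: List.replicate (m0 - 1) true) z) = t m0 := by
      rw [show fold V (false :: List.replicate (m0 - 1) true) z = t (m0 - 1) from rfl,
        ← ht_succ, show m0 - 1 + 1 = m0 by omega]
    rwa [h2] at h1
  have hp1 : ip u (t 0) ≤ p1 := by
    have h1 := Hnz []
    have h2 : (V false).mulVec (fold V [] z) = t 0 := rfl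
    rwa [h2] at h1
  -- Cauchy–Schwarz contradiction
  have hgap : p2 - p1 ≤ ip u (t m0 - t 0) := by
    rw [ip_sub]; linarith
  have hsq : (p2 - p1) ^ 2 ≤ Q u * Q (t m0 - t 0) :=
    le_trans (pow_le_pow_left₀ (by linarith) hgap 2) (ip_sq_le u _)
  have hfin : Q u * Q (t m0 - t 0) < (p2 - p1) ^ 2 := by
    have h1 : Q u * Q (t m0 - t 0) ≤ Q u * ε :=
      mul_le_mul_of_nonneg_left hQd.le (Q_nonneg u)
    have h2 : Q u * ε < (p2 - p1) ^ 2 := by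
      rw [hεdef]
      have hQu := Q_nonneg u
      have h3 : 0 < (p2 - p1) ^ 2 := pow_pos (by linarith) 2
      rw [mul_div_assoc', div_lt_iff₀ (by linarith)]
      nlinarith
    linarith
  linarith

end PRACAux

open Matrix

/-- Over a two-letter alphabet (where `true` plays the role of `a` and `false` of `b`),
neither `(a,b)*a` nor `a(a,b)*` is recognized by any PRA-C. -/
theorem lastA_and_firstA_not_recognizable_by_prac :
    (¬ ∃ (A : PRAC Bool) (p1 p2 : ℝ),
      A.Recognizes {w : List Bool | w.getLast? = some true} p1 p2) ∧
    (¬ ∃ (A : PRAC Bool) (p1 p2 : ℝ),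
      A.Recognizes {w : List Bool | w.head? = some true} p1 p2) := by
  have hacc : ∀ (A : PRAC Bool) (w : List Bool),
      A.accProb w = PRACAux.ip (fun j => ∑ q ∈ A.F, A.Vdollar q j)
        (PRACAux.fold A.V w (A.Vhash.mulVec (Pi.single A.q0 1))) := by
    intro A w
    unfold PRAC.accProb PRACAux.ip PRACAux.fold
    simp only [Matrix.mulVec, dotProduct, Finset.sum_mul]
    rw [Finset.sum_comm]
  constructor
  · rintro ⟨A, p1, p2, _h0, h12, _h2, hin, hout⟩
    refine PRACAux.core A.V (fun b v => PRACAux.Q_mulVec_le (A.ds b) v)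
      (fun b v => PRACAux.Q_mulVec_le (PRACAux.ds_transpose (A.ds b)) v)
      (fun j => ∑ q ∈ A.F, A.Vdollar q j) (A.Vhash.mulVec (Pi.single A.q0 1)) p1 p2 h12 ?_ ?_
    · intro w
      have h1 : (w ++ [true]) ∈ {w : List Bool | w.getLast? = some true} := by
        simp [List.getLast?_concat]
      have h2 := hin _ h1
      rwa [hacc, PRACAux.fold_concat] at h2
    · intro w
      have h1 : (w ++ [false]) ∉ {w : List Bool | w.getLast? = some true} := by
        simp [List.getLast?_concat]
      have h2 := hout _ h1
      rwa [hacc, PRACAux.fold_concat] at h2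
  · rintro ⟨A, p1, p2, _h0, h12, _h2, hin, hout⟩
    have hrev : ∀ (w : List Bool) (yv : Fin A.n → ℝ),
        PRACAux.ip (fun j => ∑ q ∈ A.F, A.Vdollar q j) (PRACAux.fold A.V w yv) =
          PRACAux.ip (PRACAux.fold (fun b => (A.V b)ᵀ) w.reverse
            (fun j => ∑ q ∈ A.F, A.Vdollar q j)) yv := by
      intro w
      induction w with
      | nil => intro yv; rfl
      | cons b w ih =>
          intro yv
          rw [PRACAux.fold_cons, ih, List.reverse_cons, PRACAux.fold_concat,
            PRACAux.ip_transpose]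
    refine PRACAux.core (fun b => (A.V b)ᵀ)
      (fun b v => PRACAux.Q_mulVec_le (PRACAux.ds_transpose (A.ds b)) v)
      (fun b v => by
        rw [Matrix.transpose_transpose]
        exact PRACAux.Q_mulVec_le (A.ds b) v)
      (A.Vhash.mulVec (Pi.single A.q0 1)) (fun j => ∑ q ∈ A.F, A.Vdollar q j) p1 p2 h12 ?_ ?_
    · intro w
      have h1 : (true :: w.reverse) ∈ {w : List Bool | w.head? = some true} := rfl
      have h2 := hin _ h1
      rw [hacc, show PRACAux.fold A.V (true :: w.reverse) (A.Vhash.mulVec (Pi.single A.q0 1))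
          = PRACAux.fold A.V w.reverse ((A.V true).mulVec (A.Vhash.mulVec (Pi.single A.q0 1)))
          from rfl, hrev, List.reverse_reverse, ← PRACAux.ip_transpose, PRACAux.ip_comm] at h2
      exact h2
    · intro w
      have h1 : (false :: w.reverse) ∉ {w : List Bool | w.head? = some true} := by
        simp
      have h2 := hout _ h1
      rw [hacc, show PRACAux.fold A.V (false :: w.reverse) (A.Vhash.mulVec (Pi.single A.q0 1))
          = PRACAux.fold A.V w.reverse ((A.V false).mulVec (A.Vhash.mulVec (Pi.single A.q0 1)))
          from rfl, hrev, List.reverse_reverse, ← PRACAux.ip_transpose, PRACAux.ip_comm] at h2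
      exact h2
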